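/- Let G be a group, H a subgroup, W(H) the family of subgroups that are intersections of conjugates of H, and for X ∈ W(H) let X̃ = X \ ⋃{Y ∈ W(H) : Y ⊊ X}. Suppose X ∈ W(H) with X̃ ≠ ∅. Then the stabilizer of X̃ under the conjugation action of G, namely {g ∈ G : g X̃ g⁻¹ = X̃}, equals the normalizer N_G(X) of X in G. -/

import Mathlib

open Pointwise

/-- The conjugate subgroup `g H g⁻¹`. -/
def conjSub {G : Type*} [Group G] (g : G) (H : Subgroup G) : Subgroup G :=
  Subgroup.map (MulAut.conj g).toMonoidHom H

/-- The family `W(H)` of subgroups that are intersections of nonempty families of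
conjugates of `H`. -/
def Wfam {G : Type*} [Group G] (H : Subgroup G) : Set (Subgroup G) :=
  {X | ∃ s : Set G, s.Nonempty ∧ X = ⨅ g ∈ s, conjSub g H}

/-- `X̃ = X \ ⋃ {Y ∈ W(H) : Y ⊊ X}`. -/
def tilde {G : Type*} [Group G] (H X : Subgroup G) : Set G :=
  (X : Set G) \ ⋃ Y ∈ {Y : Subgroup G | Y ∈ Wfam H ∧ Y < X}, (Y : Set G)

lemma mem_conjSub {G : Type*} [Group G] {g x : G} {K : Subgroup G} :
    x ∈ conjSub g K ↔ g⁻¹ * x * g ∈ K := by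
  constructor
  · rintro ⟨y, hy, rfl⟩
    simpa [mul_assoc] using hy
  · intro h
    exact ⟨g⁻¹ * x * g, h, by simp [mul_assoc]⟩

lemma conjSub_conjSub {G : Type*} [Group G] (g h : G) (K : Subgroup G) :
    conjSub g (conjSub h K) = conjSub (g * h) K := by
  ext x
  simp only [mem_conjSub, mul_inv_rev]
  constructor <;> intro hx <;> simpa [mul_assoc] using hx

lemma conjSub_one {G : Type*} [Group G] (K : Subgroup G) : conjSub 1 K = K := by
  ext x; simp [mem_conjSub]

lemma conjSub_le_conjSub {G : Type*} [Group G] {K L : Subgroup G} (g : G) (h : K ≤ L) :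
    conjSub g K ≤ conjSub g L := by
  intro x hx
  rw [mem_conjSub] at hx ⊢
  exact h hx

lemma conjSub_lt_iff {G : Type*} [Group G] {K L : Subgroup G} (g : G) :
    conjSub g K < conjSub g L ↔ K < L := by
  constructor
  · intro h
    have h1 := conjSub_le_conjSub (K := conjSub g K) (L := conjSub g L) g⁻¹ h.le
    rw [conjSub_conjSub, conjSub_conjSub, inv_mul_cancel, conjSub_one, conjSub_one] at h1
    refine lt_of_le_of_ne h1 ?_
    rintro rfl; exact h.ne rfl
  · intro h
    refine lt_of_le_of_ne (conjSub_le_conjSub g h.le) ?_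
    intro he
    have := congrArg (conjSub g⁻¹) he
    rw [conjSub_conjSub, conjSub_conjSub, inv_mul_cancel, conjSub_one, conjSub_one] at this
    exact h.ne this

lemma conjSub_iInf {G : Type*} [Group G] (g : G) (s : Set G) (H : Subgroup G) :
    conjSub g (⨅ a ∈ s, conjSub a H) = ⨅ a ∈ s, conjSub (g * a) H := by
  ext x
  simp only [mem_conjSub, Subgroup.mem_iInf]
  constructor <;> intro h a ha <;> have := h a ha <;>
    simpa [mul_inv_rev, mul_assoc] using this

lemma conjSub_mem_Wfam {G : Type*} [Group G] {H Y : Subgroup G} (g : G)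
    (hY : Y ∈ Wfam H) : conjSub g Y ∈ Wfam H := by
  obtain ⟨s, hs, rfl⟩ := hY
  refine ⟨(fun a => g * a) '' s, hs.image _, ?_⟩
  rw [conjSub_iInf, iInf_image]

lemma mem_tilde {G : Type*} [Group G] {H X : Subgroup G} {x : G} :
    x ∈ tilde H X ↔ x ∈ X ∧ ∀ Y ∈ Wfam H, Y < X → x ∉ Y := by
  simp only [tilde, Set.mem_diff, Set.mem_iUnion, Set.mem_setOf_eq, SetLike.mem_coe,
    not_exists]
  tauto

lemma image_conj_tilde {G : Type*} [Group G] (H X : Subgroup G) (g : G) :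
    (fun x => g * x * g⁻¹) '' tilde H X = tilde H (conjSub g X) := by
  ext x
  constructor
  · rintro ⟨y, hy, rfl⟩
    rw [mem_tilde] at hy ⊢
    refine ⟨mem_conjSub.2 (by simpa [mul_assoc] using hy.1), ?_⟩
    intro Y hY hlt hx
    have hY' : conjSub g⁻¹ Y ∈ Wfam H := conjSub_mem_Wfam _ hY
    have hlt' : conjSub g⁻¹ Y < X := by
      have := (conjSub_lt_iff (K := Y) (L := conjSub g X) g⁻¹).2 hlt
      rwa [conjSub_conjSub, inv_mul_cancel, conjSub_one] at this
    refine hy.2 _ hY' hlt' ?_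
    rw [mem_conjSub]
    simpa [mul_assoc] using hx
  · intro hx
    refine ⟨g⁻¹ * x * g, ?_, by group⟩
    rw [mem_tilde] at hx ⊢
    refine ⟨mem_conjSub.1 hx.1, ?_⟩
    intro Y hY hlt hmem
    have hY' : conjSub g Y ∈ Wfam H := conjSub_mem_Wfam _ hY
    have hlt' : conjSub g Y < conjSub g X := (conjSub_lt_iff g).2 hlt
    refine hx.2 _ hY' hlt' ?_
    rw [mem_conjSub]
    simpa [mul_assoc] using hmem

lemma Wfam_inter {G : Type*} [Group G] {H X Y : Subgroup G}
    (hX : X ∈ Wfam H) (hY : Y ∈ Wfam H) : X ⊓ Y ∈ Wfam H := by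
  obtain ⟨s, hs, rfl⟩ := hX
  obtain ⟨t, ht, rfl⟩ := hY
  refine ⟨s ∪ t, hs.mono Set.subset_union_left, ?_⟩
  rw [iInf_union]

lemma tilde_disjoint {G : Type*} [Group G] {H X₁ X₂ : Subgroup G}
    (h1 : X₁ ∈ Wfam H) (h2 : X₂ ∈ Wfam H) {x : G}
    (hx1 : x ∈ tilde H X₁) (hx2 : x ∈ tilde H X₂) : X₁ = X₂ := by
  rw [mem_tilde] at hx1 hx2
  have hint : X₁ ⊓ X₂ ∈ Wfam H := Wfam_inter h1 h2
  have hle1 : X₁ ≤ X₂ := by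
    by_contra hle
    have hlt : X₁ ⊓ X₂ < X₁ := lt_of_le_of_ne inf_le_left (fun he => hle (he ▸ inf_le_right))
    exact hx1.2 _ hint hlt ⟨hx1.1, hx2.1⟩
  have hle2 : X₂ ≤ X₁ := by
    by_contra hle
    have hlt : X₁ ⊓ X₂ < X₂ := lt_of_le_of_ne inf_le_right (fun he => hle (he ▸ inf_le_left))
    exact hx2.2 _ hint hlt ⟨hx1.1, hx2.1⟩
  exact le_antisymm hle1 hle2

lemma conjSub_eq_iff_mem_normalizer {G : Type*} [Group G] {X : Subgroup G} {g : G} :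
    conjSub g X = X ↔ g ∈ Subgroup.normalizer (X : Set G) := by
  rw [Subgroup.mem_normalizer_iff]
  constructor
  · intro h n
    constructor
    · intro hn
      rw [← h, mem_conjSub]
      simpa [mul_assoc] using hn
    · intro hn
      rw [← h, mem_conjSub] at hn
      simpa [mul_assoc] using hn
  · intro h
    ext x
    rw [mem_conjSub]
    constructor
    · intro hx
      have := (h (g⁻¹ * x * g)).1 hx
      simpa [mul_assoc] using this
    · intro hx
      exact (h (g⁻¹ * x * g)).2 (by simpa [mul_assoc] using hx)

/-- if `X̃ ≠ ∅`, the stabilizer of `X̃` under conjugation equals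
the normalizer of `X`. -/
theorem stabilizer_tilde_eq_normalizer {G : Type*} [Group G] (H : Subgroup G)
    (X : Subgroup G) (hX : X ∈ Wfam H) (hne : (tilde H X).Nonempty) (g : G) :
    (fun x => g * x * g⁻¹) '' tilde H X = tilde H X ↔ g ∈ Subgroup.normalizer (X : Set G) := by
  rw [image_conj_tilde]
  constructor
  · intro h
    obtain ⟨x, hx⟩ := hne
    have hx' : x ∈ tilde H (conjSub g X) := h ▸ hx
    exact conjSub_eq_iff_mem_normalizer.1 (tilde_disjoint (conjSub_mem_Wfam g hX) hX hx' hx)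
  · intro h
    rw [conjSub_eq_iff_mem_normalizer.2 h]
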